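/- Let τ be a simple stopping time of the form τ = Σ_k t_k·1_{E_k} with E_k ∈ F_{t_k} pairwise disjoint covering D, and let σ be another simple stopping time of the form σ = Σ_l s_l·1_{F_l} with F_l ∈ F_{s_l}. Define ρ(ω) = σ(ω) + τ(φ_σ(ω)), where φ_σ(ω)(s) = ω(s + σ(ω)). Then ρ is a simple stopping time. -/

import Mathlib

open scoped NNReal
open Set Filter MeasureTheory

/-- A path `ω : [0,∞) → {1,…,m}` is càdlàg: right-continuous with left limits. -/
def Cadlag {m : ℕ} (ω : ℝ≥0 → Fin m) : Prop :=
  (∀ t : ℝ≥0, ContinuousWithinAt ω (Set.Ici t) t) ∧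
  (∀ t : ℝ≥0, 0 < t → ∃ l : Fin m, Filter.Tendsto ω (nhdsWithin t (Set.Iio t)) (nhds l))

/-- The space `D` of càdlàg paths from `[0,∞)` to `{1,…,m}`. -/
def PathSpace (m : ℕ) : Type := {ω : ℝ≥0 → Fin m // Cadlag ω}

/-- The filtration `F_t` on `D` generated by the cylinder sets
`{ω | ω s = i}` with `s ≤ t`. -/
def cylSA (m : ℕ) (t : ℝ≥0) : MeasurableSpace (PathSpace m) :=
  MeasurableSpace.generateFrom
    {S | ∃ s : ℝ≥0, s ≤ t ∧ ∃ i : Fin m, S = {ω : PathSpace m | ω.1 s = i}}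

lemma Cadlag.shift {m : ℕ} {ω : ℝ≥0 → Fin m} (hω : Cadlag ω) (h : ℝ≥0) :
    Cadlag (fun s => ω (s + h)) := by
  constructor
  · intro t
    have hf : ContinuousWithinAt (fun s : ℝ≥0 => s + h) (Set.Ici t) t :=
      (continuous_id.add continuous_const).continuousWithinAt
    exact ContinuousWithinAt.comp (f := fun s : ℝ≥0 => s + h) (x := t)
      (s := Set.Ici t) (t := Set.Ici (t + h)) (hω.1 (t + h)) hf
      (fun s hs => (add_le_add (show t ≤ s from hs) le_rfl : t + h ≤ s + h))
  · intro t ht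
    obtain ⟨l, hl⟩ := hω.2 (t + h) (lt_of_lt_of_le ht le_self_add)
    refine ⟨l, hl.comp ?_⟩
    rw [tendsto_nhdsWithin_iff]
    constructor
    · exact ((continuous_id.add continuous_const).tendsto t).mono_left nhdsWithin_le_nhds
    · exact eventually_mem_nhdsWithin.mono fun x hx => (add_lt_add_of_lt_of_le (show x < t from hx) le_rfl : x + h < t + h)

/-- The shift flow `φ_h` on `D`: `φ_h(ω)(s) = ω(s + h)`. -/
def pshift {m : ℕ} (h : ℝ≥0) (ω : PathSpace m) : PathSpace m :=
  ⟨fun s => ω.1 (s + h), ω.2.shift h⟩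


lemma cylSA_mono (m : ℕ) {s t : ℝ≥0} (h : s ≤ t) : cylSA m s ≤ cylSA m t := by
  apply MeasurableSpace.generateFrom_mono
  rintro S ⟨u, hu, i, rfl⟩
  exact ⟨u, hu.trans h, i, rfl⟩

lemma pshift_measurable (m : ℕ) (t h : ℝ≥0) :
    @Measurable _ _ (cylSA m (t + h)) (cylSA m t) (pshift h) := by
  letI := cylSA m (t + h)
  apply measurable_generateFrom
  rintro S ⟨s, hs, i, rfl⟩
  have : pshift h ⁻¹' {ω : PathSpace m | ω.1 s = i}
      = {ω : PathSpace m | ω.1 (s + h) = i} := rfl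
  rw [this]
  exact MeasurableSpace.measurableSet_generateFrom ⟨s + h, (add_le_add hs le_rfl : s + h ≤ t + h), i, rfl⟩

/-- If `τ = Σ_k t_k·1_{E_k}` with `E_k ∈ F_{t_k}` pairwise disjoint covering
`D` and `σ = Σ_l s_l·1_{F_l}` with `F_l ∈ F_{s_l}` pairwise disjoint covering `D` are
simple stopping times, then `ρ(ω) = σ(ω) + τ(φ_{σ(ω)}(ω))` is a simple stopping time. -/
theorem composed_simple_stopping_time (m : ℕ) {ι κ : Type} [Fintype ι] [Fintype κ]
    (tt : ι → ℝ≥0) (E : ι → Set (PathSpace m))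
    (ss : κ → ℝ≥0) (F : κ → Set (PathSpace m))
    (hE : ∀ k, MeasurableSet[cylSA m (tt k)] (E k))
    (hEdisj : Pairwise (Function.onFun Disjoint E))
    (hEcover : (⋃ k, E k) = Set.univ)
    (hF : ∀ l, MeasurableSet[cylSA m (ss l)] (F l))
    (hFdisj : Pairwise (Function.onFun Disjoint F))
    (hFcover : (⋃ l, F l) = Set.univ)
    (τ σ : PathSpace m → ℝ≥0)
    (hτ : ∀ k, ∀ ω ∈ E k, τ ω = tt k)
    (hσ : ∀ l, ∀ ω ∈ F l, σ ω = ss l)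
    (ρ : PathSpace m → ℝ≥0)
    (hρ : ∀ ω, ρ ω = σ ω + τ (pshift (σ ω) ω)) :
    (Set.range ρ).Finite ∧ ∀ t : ℝ≥0, MeasurableSet[cylSA m t] {ω | ρ ω ≤ t} := by
  constructor
  · apply Set.Finite.subset (Set.finite_range (fun p : κ × ι => ss p.1 + tt p.2))
    rintro _ ⟨ω, rfl⟩
    obtain ⟨l, hl⟩ := Set.mem_iUnion.1 (hFcover ▸ Set.mem_univ ω)
    obtain ⟨k, hk⟩ := Set.mem_iUnion.1 (hEcover ▸ Set.mem_univ (pshift (ss l) ω))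
    refine ⟨(l, k), ?_⟩
    simp only [hρ, hσ l ω hl]
    rw [hτ k _ hk]
  · intro t
    have key : {ω | ρ ω ≤ t} = ⋃ l, ⋃ k,
        (if ss l + tt k ≤ t then F l ∩ pshift (ss l) ⁻¹' E k else ∅) := by
      ext ω
      simp only [Set.mem_setOf_eq, Set.mem_iUnion]
      constructor
      · intro hle
        obtain ⟨l, hl⟩ := Set.mem_iUnion.1 (hFcover ▸ Set.mem_univ ω)
        obtain ⟨k, hk⟩ := Set.mem_iUnion.1 (hEcover ▸ Set.mem_univ (pshift (ss l) ω))
        have hval : ρ ω = ss l + tt k := by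
          simp only [hρ, hσ l ω hl]; rw [hτ k _ hk]
        refine ⟨l, k, ?_⟩
        rw [if_pos (hval ▸ hle)]
        exact ⟨hl, hk⟩
      · rintro ⟨l, k, hmem⟩
        by_cases hc : ss l + tt k ≤ t
        · rw [if_pos hc] at hmem
          obtain ⟨hl, hk⟩ := hmem
          have hval : ρ ω = ss l + tt k := by
            simp only [hρ, hσ l ω hl]; rw [hτ k _ hk]
          rw [hval]; exact hc
        · rw [if_neg hc] at hmem; exact hmem.elim
    rw [key]
    letI := cylSA m t
    refine MeasurableSet.iUnion fun l => MeasurableSet.iUnion fun k => ?_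
    by_cases hc : ss l + tt k ≤ t
    · rw [if_pos hc]
      have h1 : MeasurableSet[cylSA m t] (F l) :=
        cylSA_mono m (le_trans le_self_add hc) _ (hF l)
      have h2 : MeasurableSet[cylSA m t] (pshift (ss l) ⁻¹' E k) := by
        have := pshift_measurable m (tt k) (ss l) (hE k)
        exact cylSA_mono m ((add_comm (tt k) (ss l)) ▸ hc) _ this
      exact h1.inter h2
    · rw [if_neg hc]; exact MeasurableSet.empty
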